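/- Let g : (0,∞) → ℝ be twice differentiable with g > 0, g' > 0, and suppose −g''(x)/g'(x) ≥ α for all x > 0, where α > 0. Define h(x) = g(x)/g'(x). If additionally h(x) → 0 as x → 0⁺, then h(x) ≥ (e^{αx} − 1)/α for all x > 0. -/

import Mathlib

open Set Filter

/-- Grönwall-type bound: if `−g''/g' ≥ α > 0` on `(0,∞)` with `g, g' > 0` and
`g/g' → 0` at `0⁺`, then `g(x)/g'(x) ≥ (e^{αx} − 1)/α` for all `x > 0`. -/
theorem stmt_13 (g g' g'' : ℝ → ℝ) (α : ℝ) (hα : 0 < α)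
    (hg : ∀ x : ℝ, 0 < x → HasDerivAt g (g' x) x)
    (hg' : ∀ x : ℝ, 0 < x → HasDerivAt g' (g'' x) x)
    (hgpos : ∀ x : ℝ, 0 < x → 0 < g x)
    (hg'pos : ∀ x : ℝ, 0 < x → 0 < g' x)
    (hAP : ∀ x : ℝ, 0 < x → α ≤ -(g'' x) / g' x)
    (hlim : Tendsto (fun x => g x / g' x) (nhdsWithin 0 (Ioi 0)) (nhds 0)) :
    ∀ x : ℝ, 0 < x → (Real.exp (α * x) - 1) / α ≤ g x / g' x := by
  set F : ℝ → ℝ := fun y => (g y / g' y) * Real.exp (-(α * y)) + Real.exp (-(α * y)) / α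
    with hFdef
  have hE : ∀ y : ℝ, HasDerivAt (fun y => Real.exp (-(α * y))) (Real.exp (-(α * y)) * -α) y := by
    intro y
    have h1 : HasDerivAt (fun y : ℝ => -(α * y)) (-α) y := by
      simpa using ((hasDerivAt_id y).const_mul α).fun_neg
    simpa [Function.comp_def] using (Real.hasDerivAt_exp (-(α * y))).comp y h1
  have hderiv : ∀ y ∈ Ioi (0 : ℝ), HasDerivAt F
      (((g' y * g' y - g y * g'' y) / (g' y) ^ 2) * Real.exp (-(α * y))
        + (g y / g' y) * (Real.exp (-(α * y)) * -α)
        + (Real.exp (-(α * y)) * -α) / α) y := by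
    intro y hy
    have h1 := (hg y hy).div (hg' y hy) (ne_of_gt (hg'pos y hy))
    exact (h1.mul (hE y)).add ((hE y).div_const α)
  have hderiv_nonneg : ∀ y ∈ Ioi (0 : ℝ),
      0 ≤ ((g' y * g' y - g y * g'' y) / (g' y) ^ 2) * Real.exp (-(α * y))
        + (g y / g' y) * (Real.exp (-(α * y)) * -α)
        + (Real.exp (-(α * y)) * -α) / α := by
    intro y hy
    have hy' := hg'pos y hy
    have hyg := hgpos y hy
    have hap : α * g' y ≤ -(g'' y) := by
      have := hAP y hy
      rwa [le_div_iff₀ hy'] at this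
    have hEpos : 0 < Real.exp (-(α * y)) := Real.exp_pos _
    have key : 0 ≤ (g' y * g' y - g y * g'' y) / (g' y) ^ 2 - α * (g y / g' y) - 1 := by
      have h2 : (0:ℝ) < (g' y) ^ 2 := by positivity
      have h4 : g y / g' y * (g' y) ^ 2 = g y * g' y := by
        field_simp
      rw [sub_sub, le_sub_iff_add_le, zero_add, le_div_iff₀ h2]
      nlinarith [h4, mul_le_mul_of_nonneg_left hap hyg.le]
    have heq : ((g' y * g' y - g y * g'' y) / (g' y) ^ 2) * Real.exp (-(α * y))
        + (g y / g' y) * (Real.exp (-(α * y)) * -α)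
        + (Real.exp (-(α * y)) * -α) / α
        = Real.exp (-(α * y)) *
          ((g' y * g' y - g y * g'' y) / (g' y) ^ 2 - α * (g y / g' y) - 1) := by
      field_simp
      ring
    rw [heq]
    positivity
  have hcont : ContinuousOn F (Ioi 0) := fun y hy =>
    ((hderiv y hy).continuousAt).continuousWithinAt
  have hdiff : DifferentiableOn ℝ F (interior (Ioi 0)) := by
    rw [interior_Ioi]
    exact fun y hy => ((hderiv y hy).differentiableAt).differentiableWithinAt
  have hmono : MonotoneOn F (Ioi 0) := by
    apply monotoneOn_of_deriv_nonneg (convex_Ioi 0) hcont hdiff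
    intro y hy
    rw [interior_Ioi] at hy
    rw [(hderiv y hy).deriv]
    exact hderiv_nonneg y hy
  have hFlim : Tendsto F (nhdsWithin 0 (Ioi 0)) (nhds (0 * Real.exp (-(α * 0)) +
      Real.exp (-(α * 0)) / α)) := by
    have hexp : Tendsto (fun y : ℝ => Real.exp (-(α * y))) (nhdsWithin 0 (Ioi 0))
        (nhds (Real.exp (-(α * 0)))) :=
      ((Real.continuous_exp.comp (continuous_const.mul continuous_id).neg).tendsto 0).mono_left
        nhdsWithin_le_nhds
    exact (hlim.mul hexp).add (hexp.div_const α)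
  intro x hx
  have hFx : Real.exp (-(α * 0)) / α ≤ F x := by
    have h0 : 0 * Real.exp (-(α * 0)) + Real.exp (-(α * 0)) / α = Real.exp (-(α * 0)) / α := by
      ring
    rw [← h0]
    apply le_of_tendsto hFlim
    filter_upwards [Ioc_mem_nhdsGT_of_mem (Set.left_mem_Ico.2 hx)] with y hy
    exact hmono hy.1 hx hy.2
  have hEx : Real.exp (α * x) * Real.exp (-(α * x)) = 1 := by
    rw [← Real.exp_add]; simp
  have hExpos : 0 < Real.exp (-(α * x)) := Real.exp_pos _
  simp only [hFdef] at hFx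
  have h1 : Real.exp (-(α * 0)) = 1 := by simp
  rw [h1] at hFx
  rw [Real.exp_neg] at hFx
  have hEpos2 : 0 < Real.exp (α * x) := Real.exp_pos _
  rw [div_le_iff₀ hα]
  have h := mul_le_mul_of_nonneg_left hFx (le_of_lt (mul_pos hEpos2 hα))
  rw [mul_comm] at h
  field_simp at h
  have h2 : g x * (Real.exp (α * x) * α) / (g' x * Real.exp (α * x)) = g x / g' x * α := by
    rw [div_eq_iff ((mul_pos (hg'pos x hx) hEpos2).ne')]
    field_simp [ne_of_gt (hg'pos x hx)]
  rw [mul_div_assoc] at h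
  linarith
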